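/- arXiv:2112.14456 — 4 statements merged into one kernel-verified Lean document; each statement's English description precedes it below -/
import Mathlib

section
/- Assume b = A x̄ for some x̄ ∈ ℝ^n. For any x ∈ ℝ^n, the point x̃ := x − Aᵀ S W Sᵀ (Ax − b) satisfies: (i) Sᵀ A x̃ = Sᵀ b; (ii) ‖x − x̃‖² = (Ax − b)ᵀ H (Ax − b) = g(x); and (iii) x̃ is the Euclidean orthogonal projection of x onto the sketched hyperplane, i.e. ‖x − x̃‖ ≤ ‖x − y‖ for every y with Sᵀ A y = Sᵀ b. -/
open Matrix

lemma dot_self_nonneg' {k : ℕ} (v : Fin k → ℝ) : 0 ≤ v ⬝ᵥ v := by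
  classical
  unfold dotProduct
  exact Finset.sum_nonneg fun i _ => mul_self_nonneg _

/-- for a consistent system, x̃ := x − Aᵀ S W Sᵀ (Ax − b) satisfies the
sketched equation, ‖x − x̃‖² equals the sketched loss g(x), and x̃ is the Euclidean
orthogonal projection of x onto the sketched hyperplane. -/
theorem stmt2 {m n τ : ℕ} (A : Matrix (Fin m) (Fin n) ℝ) (b : Fin m → ℝ)
    (xbar : Fin n → ℝ) (hxbar : A.mulVec xbar = b)
    (S : Matrix (Fin m) (Fin τ) ℝ) (W : Matrix (Fin τ) (Fin τ) ℝ)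
    (hWsym : Wᵀ = W)
    (hMWM : (Sᵀ * A * Aᵀ * S) * W * (Sᵀ * A * Aᵀ * S) = Sᵀ * A * Aᵀ * S)
    (hWMW : W * (Sᵀ * A * Aᵀ * S) * W = W)
    (hMW : ((Sᵀ * A * Aᵀ * S) * W)ᵀ = (Sᵀ * A * Aᵀ * S) * W)
    (hWM : (W * (Sᵀ * A * Aᵀ * S))ᵀ = W * (Sᵀ * A * Aᵀ * S))
    (x : Fin n → ℝ) :
    (Sᵀ * A).mulVec (x - (Aᵀ * S * W * Sᵀ).mulVec (A.mulVec x - b)) = Sᵀ.mulVec b ∧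
    (x - (x - (Aᵀ * S * W * Sᵀ).mulVec (A.mulVec x - b))) ⬝ᵥ
        (x - (x - (Aᵀ * S * W * Sᵀ).mulVec (A.mulVec x - b))) =
      (A.mulVec x - b) ⬝ᵥ (S * W * Sᵀ).mulVec (A.mulVec x - b) ∧
    ∀ y : Fin n → ℝ, (Sᵀ * A).mulVec y = Sᵀ.mulVec b →
      Real.sqrt ((x - (x - (Aᵀ * S * W * Sᵀ).mulVec (A.mulVec x - b))) ⬝ᵥ
          (x - (x - (Aᵀ * S * W * Sᵀ).mulVec (A.mulVec x - b)))) ≤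
        Real.sqrt ((x - y) ⬝ᵥ (x - y)) := by
  clear hMW hWM
  set B : Matrix (Fin τ) (Fin n) ℝ := Sᵀ * A with hBdef
  have hBT : Aᵀ * S = Bᵀ := by
    rw [hBdef, Matrix.transpose_mul, Matrix.transpose_transpose]
  rw [show B * Aᵀ * S = B * (Aᵀ * S) from Matrix.mul_assoc B Aᵀ S, hBT] at hMWM hWMW
  set Mt : Matrix (Fin τ) (Fin τ) ℝ := B * Bᵀ with hMt
  -- hMWM : Mt * W * Mt = Mt,  hWMW : W * Mt * W = W
  have hMsym : Mtᵀ = Mt := by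
    rw [hMt, Matrix.transpose_mul, Matrix.transpose_transpose]
  -- key identity : Mt * W * B = B
  have hkey : Mt * W * B = B := by
    set C : Matrix (Fin τ) (Fin n) ℝ := Mt * W * B - B with hCdef
    have hCT : Cᵀ = Bᵀ * (W * Mt) - Bᵀ := by
      rw [hCdef]
      simp only [Matrix.transpose_sub, Matrix.transpose_mul, hWsym, hMsym,
        Matrix.mul_assoc]
    have hCC : C * Cᵀ = 0 := by
      rw [hCdef]  -- replace only via hCT for the transpose part
      rw [hCT, Matrix.sub_mul, Matrix.mul_sub, Matrix.mul_sub]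
      have t1 : (Mt * W * B) * (Bᵀ * (W * Mt)) = Mt * W * Mt * W * Mt := by
        rw [hMt]; simp only [Matrix.mul_assoc]
      have t2 : (Mt * W * B) * Bᵀ = Mt * W * Mt := by
        rw [hMt]; simp only [Matrix.mul_assoc]
      have t3 : B * (Bᵀ * (W * Mt)) = Mt * W * Mt := by
        rw [hMt]; simp only [Matrix.mul_assoc]
      rw [t1, t2, t3, hMWM, hMWM, hMt]
      abel
    have hC0 : C = 0 := by
      have h := (Matrix.self_mul_conjTranspose_eq_zero (A := C))
      apply h.mp
      rw [Matrix.conjTranspose_eq_transpose_of_trivial]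
      exact hCC
    have h0 : Mt * W * B - B = 0 := hCdef.symm.trans hC0
    exact sub_eq_zero.mp h0
  -- notation
  set r : Fin m → ℝ := A.mulVec x - b with hrdef
  set d : Fin n → ℝ := (Aᵀ * S * W * Sᵀ).mulVec r with hddef
  have hd : d = (Bᵀ * W * Sᵀ).mulVec r := by rw [hddef, hBT]
  -- r = A (x - xbar), so Sᵀ r = B (x - xbar)
  have hSr : Sᵀ.mulVec r = B.mulVec (x - xbar) := by
    rw [hrdef, ← hxbar, ← Matrix.mulVec_sub, Matrix.mulVec_mulVec, hBdef]
  -- (i)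
  have h1 : B.mulVec d = B.mulVec x - B.mulVec xbar := by
    rw [hd, Matrix.mulVec_mulVec,
      show B * (Bᵀ * W * Sᵀ) = Mt * W * Sᵀ from by rw [hMt]; simp only [Matrix.mul_assoc],
      ← Matrix.mulVec_mulVec, hSr, Matrix.mulVec_mulVec, hkey, Matrix.mulVec_sub]
  have h2 : B.mulVec xbar = Sᵀ.mulVec b := by
    rw [hBdef, ← Matrix.mulVec_mulVec, hxbar]
  have part1 : B.mulVec (x - d) = Sᵀ.mulVec b := by
    rw [Matrix.mulVec_sub, h1, ← h2]
    abel
  have hxd : x - (x - d) = d := by abel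
  -- (ii)
  have part2 : d ⬝ᵥ d = r ⬝ᵥ (S * W * Sᵀ).mulVec r := by
    have ht : (Bᵀ * W * Sᵀ)ᵀ = S * (W * B) := by
      simp only [Matrix.transpose_mul, Matrix.transpose_transpose, hWsym,
        Matrix.mul_assoc]
    have hN : (Bᵀ * W * Sᵀ)ᵀ * (Bᵀ * W * Sᵀ) = S * W * Sᵀ := by
      rw [ht, show S * (W * B) * (Bᵀ * W * Sᵀ) = S * (W * (B * Bᵀ) * W) * Sᵀ from by
        simp only [Matrix.mul_assoc], ← hMt, hWMW, Matrix.mul_assoc]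
    rw [hd, Matrix.dotProduct_mulVec, ← Matrix.mulVec_transpose,
      Matrix.mulVec_mulVec, hN, dotProduct_comm, Matrix.mul_assoc]
  refine ⟨part1, by rw [hxd]; exact part2, ?_⟩
  -- (iii)
  intro y hy
  rw [hxd]
  apply Real.sqrt_le_sqrt
  have horth : ∀ z : Fin n → ℝ, B.mulVec z = 0 → d ⬝ᵥ z = 0 := by
    intro z hz
    rw [hd, show Bᵀ * W * Sᵀ = Bᵀ * (W * Sᵀ) from Matrix.mul_assoc Bᵀ W Sᵀ,
      ← Matrix.mulVec_mulVec, Matrix.mulVec_transpose, ← Matrix.dotProduct_mulVec,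
      hz, dotProduct_zero]
  have hz0 : B.mulVec (x - d - y) = 0 := by
    rw [show x - d - y = (x - d) - y from rfl, Matrix.mulVec_sub, part1, hy, sub_self]
  have ho : d ⬝ᵥ (x - d - y) = 0 := horth _ hz0
  have ho' : (x - d - y) ⬝ᵥ d = 0 := by rw [dotProduct_comm]; exact ho
  have hdecomp : x - y = d + (x - d - y) := by abel
  calc d ⬝ᵥ d ≤ d ⬝ᵥ d + (x - d - y) ⬝ᵥ (x - d - y) := by
        nlinarith [dot_self_nonneg' (x - d - y)]
    _ = (x - y) ⬝ᵥ (x - y) := by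
        rw [hdecomp, add_dotProduct, dotProduct_add, dotProduct_add,
          ho, ho']
        ring
end

section
/- Sufficient decrease of one sketched Bregman projection step: let f : ℝ^n → ℝ be μ-strongly convex, x ∈ ℝ^n, x_* ∈ ∂f(x), and let L := {y ∈ ℝ^n : Sᵀ A y = Sᵀ b}. Suppose x̂ ∈ L, x̂_* ∈ ∂f(x̂), and the admissibility inequality D_f^{x̂_*}(x̂, y) ≤ D_f^{x_*}(x, y) − D_f^{x_*}(x, x̂) holds for all y ∈ L. If A x̄ = b, then D_f^{x̂_*}(x̂, x̄) ≤ D_f^{x_*}(x, x̄) − (μ/2)·g(x), where g(x) = (Ax − b)ᵀ H (Ax − b) is the sketched loss. -/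
open Matrix

def IsSubgrad {n : ℕ} (f : (Fin n → ℝ) → ℝ) (x xs : Fin n → ℝ) : Prop :=
  ∀ u : Fin n → ℝ, f u ≥ f x + xs ⬝ᵥ (u - x)

def StronglyConvexWith {n : ℕ} (μ : ℝ) (f : (Fin n → ℝ) → ℝ) : Prop :=
  ∀ x y xs : Fin n → ℝ, IsSubgrad f x xs →
    f y ≥ f x + xs ⬝ᵥ (y - x) + μ / 2 * ((y - x) ⬝ᵥ (y - x))

noncomputable def breg {n : ℕ} (f : (Fin n → ℝ) → ℝ) (xs x y : Fin n → ℝ) : ℝ :=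
  f y - f x - xs ⬝ᵥ (y - x)

private lemma dp_self_nonneg {n : ℕ} (v : Fin n → ℝ) : 0 ≤ v ⬝ᵥ v :=
  Finset.sum_nonneg fun i _ => mul_self_nonneg _

/-- u ⬝ᵥ (B*C) v = (Bᵀ u) ⬝ᵥ (C v). -/
private lemma quad_eq {a c d : ℕ} (u : Fin a → ℝ) (B : Matrix (Fin a) (Fin c) ℝ)
    (C : Matrix (Fin c) (Fin d) ℝ) (v : Fin d → ℝ) :
    u ⬝ᵥ (B * C) *ᵥ v = (Bᵀ *ᵥ u) ⬝ᵥ (C *ᵥ v) := by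
  rw [dotProduct_mulVec, ← Matrix.vecMul_vecMul, ← dotProduct_mulVec,
    Matrix.mulVec_transpose]

/-- symmetric idempotent quadratic form bound. -/
private lemma proj_le {n : ℕ} (P : Matrix (Fin n) (Fin n) ℝ) (hPT : Pᵀ = P)
    (hPP : P * P = P) (q : Fin n → ℝ) : q ⬝ᵥ P *ᵥ q ≤ q ⬝ᵥ q := by
  have h0 : (0 : ℝ) ≤ (q - P *ᵥ q) ⬝ᵥ (q - P *ᵥ q) := dp_self_nonneg _
  have hPqPq : (P *ᵥ q) ⬝ᵥ (P *ᵥ q) = q ⬝ᵥ P *ᵥ q := by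
    rw [dotProduct_mulVec (P *ᵥ q) P q, ← Matrix.mulVec_transpose, hPT,
      Matrix.mulVec_mulVec, hPP, dotProduct_comm, dotProduct_mulVec,
      ← Matrix.mulVec_transpose, hPT]
  have hcomm : (P *ᵥ q) ⬝ᵥ q = q ⬝ᵥ P *ᵥ q := dotProduct_comm _ _
  have hexp : (q - P *ᵥ q) ⬝ᵥ (q - P *ᵥ q)
      = q ⬝ᵥ q - q ⬝ᵥ P *ᵥ q - (P *ᵥ q) ⬝ᵥ q + (P *ᵥ q) ⬝ᵥ (P *ᵥ q) := by
    simp [sub_dotProduct, dotProduct_sub]; ring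
  rw [hexp, hPqPq, hcomm] at h0
  linarith

/-- sufficient decrease of one sketched Bregman projection step:
D_f^{x̂_*}(x̂, x̄) ≤ D_f^{x_*}(x, x̄) − (μ/2)·g(x). -/
theorem stmt4 {m n τ : ℕ} (A : Matrix (Fin m) (Fin n) ℝ) (b : Fin m → ℝ)
    (xbar : Fin n → ℝ) (hxbar : A.mulVec xbar = b)
    (S : Matrix (Fin m) (Fin τ) ℝ) (W : Matrix (Fin τ) (Fin τ) ℝ)
    (hWsym : Wᵀ = W)
    (hMWM : (Sᵀ * A * Aᵀ * S) * W * (Sᵀ * A * Aᵀ * S) = Sᵀ * A * Aᵀ * S)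
    (hWMW : W * (Sᵀ * A * Aᵀ * S) * W = W)
    (hMW : ((Sᵀ * A * Aᵀ * S) * W)ᵀ = (Sᵀ * A * Aᵀ * S) * W)
    (hWM : (W * (Sᵀ * A * Aᵀ * S))ᵀ = W * (Sᵀ * A * Aᵀ * S))
    (f : (Fin n → ℝ) → ℝ) (μ : ℝ) (hμ : 0 < μ) (hf : StronglyConvexWith μ f)
    (x xs : Fin n → ℝ) (hxs : IsSubgrad f x xs)
    (xhat xhs : Fin n → ℝ)
    (hxhatL : (Sᵀ * A).mulVec xhat = Sᵀ.mulVec b)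
    (hxhs : IsSubgrad f xhat xhs)
    (hadm : ∀ y : Fin n → ℝ, (Sᵀ * A).mulVec y = Sᵀ.mulVec b →
      breg f xhs xhat y ≤ breg f xs x y - breg f xs x xhat) :
    breg f xhs xhat xbar ≤ breg f xs x xbar -
      μ / 2 * ((A.mulVec x - b) ⬝ᵥ (S * W * Sᵀ).mulVec (A.mulVec x - b)) := by
  have hPT : ((Sᵀ * A)ᵀ * (W * (Sᵀ * A)))ᵀ = (Sᵀ * A)ᵀ * (W * (Sᵀ * A)) := by
    simp [Matrix.transpose_mul, hWsym, Matrix.mul_assoc]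
  have hPP : ((Sᵀ * A)ᵀ * (W * (Sᵀ * A))) * ((Sᵀ * A)ᵀ * (W * (Sᵀ * A)))
      = (Sᵀ * A)ᵀ * (W * (Sᵀ * A)) := by
    calc ((Sᵀ * A)ᵀ * (W * (Sᵀ * A))) * ((Sᵀ * A)ᵀ * (W * (Sᵀ * A)))
        = Aᵀ * S * (W * (Sᵀ * A * Aᵀ * S) * W) * (Sᵀ * A) := by
          simp only [Matrix.transpose_mul, Matrix.transpose_transpose, Matrix.mul_assoc]
      _ = (Sᵀ * A)ᵀ * (W * (Sᵀ * A)) := by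
          rw [hWMW]
          simp only [Matrix.transpose_mul, Matrix.transpose_transpose, Matrix.mul_assoc]
  have hSr : Sᵀ *ᵥ (A *ᵥ x - b) = -((Sᵀ * A) *ᵥ (xhat - x)) := by
    rw [Matrix.mulVec_sub, Matrix.mulVec_sub, Matrix.mulVec_mulVec, hxhatL]
    abel
  have hquad : (A *ᵥ x - b) ⬝ᵥ (S * W * Sᵀ) *ᵥ (A *ᵥ x - b)
      = (xhat - x) ⬝ᵥ ((Sᵀ * A)ᵀ * (W * (Sᵀ * A))) *ᵥ (xhat - x) := by
    rw [Matrix.mul_assoc, quad_eq (A *ᵥ x - b) S (W * Sᵀ) (A *ᵥ x - b),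
      ← Matrix.mulVec_mulVec, hSr,
      quad_eq (xhat - x) (Sᵀ * A)ᵀ (W * (Sᵀ * A)) (xhat - x),
      Matrix.transpose_transpose, ← Matrix.mulVec_mulVec]
    simp [Matrix.mulVec_neg, ← Matrix.mulVec_mulVec]
  have hproj := proj_le _ hPT hPP (xhat - x)
  have hxbarL : (Sᵀ * A) *ᵥ xbar = Sᵀ *ᵥ b := by
    rw [← Matrix.mulVec_mulVec, hxbar]
  have hA := hadm xbar hxbarL
  have hsc := hf x xhat xs hxs
  have hB : μ / 2 * ((xhat - x) ⬝ᵥ (xhat - x)) ≤ breg f xs x xhat := by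
    rw [breg]; linarith
  have hC : μ / 2 * ((A *ᵥ x - b) ⬝ᵥ (S * W * Sᵀ) *ᵥ (A *ᵥ x - b))
      ≤ μ / 2 * ((xhat - x) ⬝ᵥ (xhat - x)) := by
    rw [hquad]
    exact mul_le_mul_of_nonneg_left hproj (by positivity)
  linarith
end

section
/- Expected sketched loss dominates the residual: let p ∈ Δ_q^† and suppose there is σ > 0 such that Σ_{i=1}^q p_i·vᵀ Z_i v ≥ σ‖v‖² for every v ∉ Null(A). If A x̄ = b, then for every x ∈ ℝ^n, Σ_{i=1}^q p_i g_i(x) ≥ (σ/‖A‖²)·‖Ax − b‖², where ‖A‖ is the spectral norm of A (assume A ≠ 0). -/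
open Matrix

/-- The spectral norm (ℓ²→ℓ² operator norm) of a real matrix. -/
noncomputable def specNorm {m n : ℕ} (A : Matrix (Fin m) (Fin n) ℝ) : ℝ :=
  ‖LinearMap.toContinuousLinearMap (Matrix.toEuclideanLin A)‖

lemma norm_sq_eq_dot {k : ℕ} (w : Fin k → ℝ) :
    ‖(WithLp.equiv 2 (Fin k → ℝ)).symm w‖ ^ 2 = w ⬝ᵥ w := by
  rw [EuclideanSpace.norm_eq, Real.sq_sqrt (by positivity)]
  simp [dotProduct, sq]

lemma mulVec_sq_le {m n : ℕ} (A : Matrix (Fin m) (Fin n) ℝ) (v : Fin n → ℝ) :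
    (A.mulVec v) ⬝ᵥ (A.mulVec v) ≤ specNorm A ^ 2 * (v ⬝ᵥ v) := by
  have h := (LinearMap.toContinuousLinearMap (Matrix.toEuclideanLin A)).le_opNorm
    ((WithLp.equiv 2 (Fin n → ℝ)).symm v)
  have h2 : ‖(LinearMap.toContinuousLinearMap (Matrix.toEuclideanLin A))
      ((WithLp.equiv 2 (Fin n → ℝ)).symm v)‖ ^ 2
      ≤ specNorm A ^ 2 * ‖(WithLp.equiv 2 (Fin n → ℝ)).symm v‖ ^ 2 := by
    rw [← mul_pow]
    exact pow_le_pow_left₀ (norm_nonneg _) h 2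
  rwa [LinearMap.coe_toContinuousLinearMap', show Matrix.toEuclideanLin A ((WithLp.equiv 2 (Fin n → ℝ)).symm v)
      = (WithLp.equiv 2 (Fin m → ℝ)).symm (A *ᵥ v) from rfl,
    norm_sq_eq_dot, norm_sq_eq_dot] at h2

lemma specNorm_pos {m n : ℕ} (A : Matrix (Fin m) (Fin n) ℝ) (hA : A ≠ 0) :
    0 < specNorm A := by
  rcases lt_or_eq_of_le (norm_nonneg (LinearMap.toContinuousLinearMap (Matrix.toEuclideanLin A))) with h | h
  · exact h
  · exfalso; apply hA
    have : LinearMap.toContinuousLinearMap (Matrix.toEuclideanLin A) = 0 := by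
      rw [← norm_eq_zero]; exact h.symm
    have h2 : Matrix.toEuclideanLin A = 0 := by
      apply LinearMap.ext; intro v
      have := congrArg (fun f => f v) (congrArg ContinuousLinearMap.toLinearMap this)
      simpa using this
    have h3 := (Matrix.toEuclideanLin (m := Fin m) (n := Fin n) (𝕜 := ℝ)).injective (a₁ := A) (a₂ := 0) (by simpa using h2)
    exact h3

/-- expected sketched loss dominates the residual:
Σ p_i g_i(x) ≥ (σ/‖A‖²)·‖Ax − b‖². -/
theorem stmt5 {m n τ q : ℕ} (A : Matrix (Fin m) (Fin n) ℝ) (hA : A ≠ 0)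
    (b : Fin m → ℝ) (xbar : Fin n → ℝ) (hxbar : A.mulVec xbar = b)
    (S : Fin q → Matrix (Fin m) (Fin τ) ℝ) (W : Fin q → Matrix (Fin τ) (Fin τ) ℝ)
    (hWsym : ∀ i, (W i)ᵀ = W i)
    (hMWM : ∀ i, ((S i)ᵀ * A * Aᵀ * S i) * W i * ((S i)ᵀ * A * Aᵀ * S i)
      = (S i)ᵀ * A * Aᵀ * S i)
    (hWMW : ∀ i, W i * ((S i)ᵀ * A * Aᵀ * S i) * W i = W i)
    (hMW : ∀ i, (((S i)ᵀ * A * Aᵀ * S i) * W i)ᵀ = ((S i)ᵀ * A * Aᵀ * S i) * W i)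
    (hWM : ∀ i, (W i * ((S i)ᵀ * A * Aᵀ * S i))ᵀ = W i * ((S i)ᵀ * A * Aᵀ * S i))
    (p : Fin q → ℝ) (hp : ∀ i, 0 < p i) (hp1 : ∑ i, p i = 1)
    (σ : ℝ) (hσ : 0 < σ)
    (hspec : ∀ v : Fin n → ℝ, A.mulVec v ≠ 0 →
      σ * (v ⬝ᵥ v) ≤ ∑ i, p i * (v ⬝ᵥ (Aᵀ * (S i * W i * (S i)ᵀ) * A).mulVec v))
    (x : Fin n → ℝ) :
    ∑ i, p i * ((A.mulVec x - b) ⬝ᵥ (S i * W i * (S i)ᵀ).mulVec (A.mulVec x - b)) ≥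
      σ / (specNorm A) ^ 2 * ((A.mulVec x - b) ⬝ᵥ (A.mulVec x - b)) := by
  set v : Fin n → ℝ := x - xbar with hv
  have hAv : A.mulVec v = A.mulVec x - b := by
    rw [hv, mulVec_sub, hxbar]
  by_cases hr : A.mulVec x - b = 0
  · rw [hr]; simp
  · have hAv0 : A.mulVec v ≠ 0 := by rw [hAv]; exact hr
    have key := hspec v hAv0
    have heq : ∀ i, v ⬝ᵥ (Aᵀ * (S i * W i * (S i)ᵀ) * A).mulVec v
        = (A.mulVec x - b) ⬝ᵥ (S i * W i * (S i)ᵀ).mulVec (A.mulVec x - b) := by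
      intro i
      rw [← hAv, ← mulVec_mulVec, ← mulVec_mulVec, dotProduct_mulVec, vecMul_transpose]
    rw [Finset.sum_congr rfl (fun i _ => by rw [heq i])] at key
    have hN := specNorm_pos A hA
    have hN2 : (0:ℝ) < specNorm A ^ 2 := by positivity
    have hle := mulVec_sq_le A v
    rw [hAv] at hle
    calc σ / (specNorm A) ^ 2 * ((A.mulVec x - b) ⬝ᵥ (A.mulVec x - b))
        ≤ σ / (specNorm A) ^ 2 * (specNorm A ^ 2 * (v ⬝ᵥ v)) := by
          apply mul_le_mul_of_nonneg_left hle (by positivity)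
      _ = σ * (v ⬝ᵥ v) := by field_simp
      _ ≤ _ := key
end

section
/- The dual update produces an admissible subgradient: let f : ℝ^n → ℝ be strongly convex, x ∈ ℝ^n, x_* ∈ ∂f(x), S ∈ ℝ^{m×τ}, and suppose y ∈ ℝ^τ and x⁺ ∈ ℝ^n satisfy x_* − Aᵀ S y ∈ ∂f(x⁺) and Sᵀ A x⁺ = Sᵀ b. Set x⁺_* := x_* − Aᵀ S y. Then for every z with Sᵀ A z = Sᵀ b, D_f^{x⁺_*}(x⁺, z) = D_f^{x_*}(x, z) − D_f^{x_*}(x, x⁺); in particular, x⁺ minimizes z ↦ D_f^{x_*}(x, z) over the sketched hyperplane {z : Sᵀ A z = Sᵀ b}, with admissible subgradient x⁺_*. -/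
open Matrix

lemma key_orth {m n τ : ℕ} (A : Matrix (Fin m) (Fin n) ℝ)
    (S : Matrix (Fin m) (Fin τ) ℝ) (y : Fin τ → ℝ) (v : Fin n → ℝ)
    (hv : (Sᵀ * A).mulVec v = 0) : (Aᵀ * S).mulVec y ⬝ᵥ v = 0 := by
  have : (Aᵀ * S).mulVec y ⬝ᵥ v = y ⬝ᵥ (Sᵀ * A).mulVec v := by
    rw [dotProduct_comm, dotProduct_mulVec, ← transpose_transpose (Aᵀ * S),
      transpose_mul, transpose_transpose, vecMul_transpose, dotProduct_comm]
  rw [this, hv, dotProduct_zero]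

/-- the dual update produces an admissible subgradient: if
x⁺_* := x_* − Aᵀ S y ∈ ∂f(x⁺) and Sᵀ A x⁺ = Sᵀ b, then for every z on the sketched
hyperplane D_f^{x⁺_*}(x⁺, z) = D_f^{x_*}(x, z) − D_f^{x_*}(x, x⁺); in particular x⁺
minimizes z ↦ D_f^{x_*}(x, z) over the sketched hyperplane. -/
theorem stmt17 {m n τ : ℕ} (A : Matrix (Fin m) (Fin n) ℝ) (b : Fin m → ℝ)
    (S : Matrix (Fin m) (Fin τ) ℝ)
    (f : (Fin n → ℝ) → ℝ) (hf : ∃ μ : ℝ, 0 < μ ∧ StronglyConvexWith μ f)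
    (x xs : Fin n → ℝ) (hxs : IsSubgrad f x xs)
    (y : Fin τ → ℝ) (xplus : Fin n → ℝ)
    (hsub : IsSubgrad f xplus (xs - (Aᵀ * S).mulVec y))
    (hfeas : (Sᵀ * A).mulVec xplus = Sᵀ.mulVec b) :
    (∀ z : Fin n → ℝ, (Sᵀ * A).mulVec z = Sᵀ.mulVec b →
      breg f (xs - (Aᵀ * S).mulVec y) xplus z = breg f xs x z - breg f xs x xplus) ∧
    (∀ z : Fin n → ℝ, (Sᵀ * A).mulVec z = Sᵀ.mulVec b →
      breg f xs x xplus ≤ breg f xs x z) := by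
  have hmain : ∀ z : Fin n → ℝ, (Sᵀ * A).mulVec z = Sᵀ.mulVec b →
      breg f (xs - (Aᵀ * S).mulVec y) xplus z = breg f xs x z - breg f xs x xplus := by
    intro z hz
    have horth : (Aᵀ * S).mulVec y ⬝ᵥ (z - xplus) = 0 := by
      apply key_orth
      rw [mulVec_sub, hz, hfeas, sub_self]
    simp only [breg, sub_dotProduct] at *
    have h1 : xs ⬝ᵥ (z - x) = xs ⬝ᵥ (z - xplus) + xs ⬝ᵥ (xplus - x) := by
      rw [← dotProduct_add, sub_add_sub_cancel]
    linarith
  refine ⟨hmain, fun z hz => ?_⟩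
  have h := hmain z hz
  have h2 : 0 ≤ breg f (xs - (Aᵀ * S).mulVec y) xplus z := by
    have := hsub z
    simp only [breg]; linarith
  linarith
end
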